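/- arXiv:1312.0416 — 3 statements merged into one kernel-verified Lean document; each statement's English description precedes it below -/
import Mathlib

section
/- Let X = (X_1,…,X_n) be a real, centered, weakly stationary Gaussian (or more generally second-order) process whose autocovariance has spectral density f, i.e. Cov(X_j, X_k) = (1/2π)∫_{−π}^{π} e^{i(j−k)λ} f(λ) dλ with f even and nonnegative. Then the smallest eigenvalue of the covariance matrix Cov(X) satisfies λ_min(Cov(X)) ≥ (1 − 1/π) · inf_{λ ∈ [1/n, π]} f(λ). -/
open Real MeasureTheory intervalIntegral

lemma int_cos_aux (j k : ℕ) :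
    ∫ x in (0:ℝ)..π, Real.cos (((j:ℝ) - (k:ℝ)) * x) = if j = k then π else 0 := by
  by_cases h : j = k
  · simp [h]
  · have hc : ((j:ℝ) - (k:ℝ)) ≠ 0 := sub_ne_zero.2 (by exact_mod_cast h)
    rw [if_neg h]
    have := intervalIntegral.integral_comp_mul_left (a := (0:ℝ)) (b := π)
      (fun x => Real.cos x) hc
    rw [this]
    have : Real.sin (((j:ℝ) - (k:ℝ)) * π) = 0 := by
      have : ((j:ℝ) - (k:ℝ)) = ((j - k : ℤ) : ℝ) := by push_cast; ring
      rw [this]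
      exact Real.sin_int_mul_pi _
    simp [integral_cos, this]

section
variable (n : ℕ) (v : Fin n → ℝ)

/-- The squared modulus of the trigonometric polynomial. -/
noncomputable def Gfun : ℝ → ℝ := fun lam =>
  (∑ j, v j * Real.cos ((j:ℝ) * lam)) ^ 2 + (∑ j, v j * Real.sin ((j:ℝ) * lam)) ^ 2

lemma Gfun_cont : Continuous (Gfun n v) := by
  unfold Gfun; fun_prop

lemma Gfun_nonneg (lam : ℝ) : 0 ≤ Gfun n v lam := by
  unfold Gfun; positivity

lemma Gfun_even (lam : ℝ) : Gfun n v (-lam) = Gfun n v lam := by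
  unfold Gfun
  simp [mul_comm, neg_sq]

lemma Gfun_eq (lam : ℝ) :
    ∑ j, ∑ k, v j * v k * Real.cos (((j:ℝ) - (k:ℝ)) * lam) = Gfun n v lam := by
  unfold Gfun
  rw [sq, sq, Finset.sum_mul_sum, Finset.sum_mul_sum, ← Finset.sum_add_distrib]
  refine Finset.sum_congr rfl fun j _ => ?_
  rw [← Finset.sum_add_distrib]
  refine Finset.sum_congr rfl fun k _ => ?_
  rw [sub_mul, Real.cos_sub]
  ring

lemma Gfun_le (hv : ∑ j, v j ^ 2 = 1) (lam : ℝ) : Gfun n v lam ≤ n := by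
  unfold Gfun
  have h1 := Finset.sum_mul_sq_le_sq_mul_sq Finset.univ v (fun j => Real.cos ((j:ℝ) * lam))
  have h2 := Finset.sum_mul_sq_le_sq_mul_sq Finset.univ v (fun j => Real.sin ((j:ℝ) * lam))
  calc _ ≤ (∑ j, v j ^ 2) * (∑ j : Fin n, Real.cos ((j:ℝ) * lam) ^ 2)
        + (∑ j, v j ^ 2) * (∑ j : Fin n, Real.sin ((j:ℝ) * lam) ^ 2) := add_le_add h1 h2
    _ = ∑ j : Fin n, (Real.cos ((j:ℝ) * lam) ^ 2 + Real.sin ((j:ℝ) * lam) ^ 2) := by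
        rw [hv, one_mul, one_mul, ← Finset.sum_add_distrib]
    _ = n := by simp [Real.cos_sq_add_sin_sq]

set_option maxHeartbeats 1000000 in
lemma Gfun_integral (hv : ∑ j, v j ^ 2 = 1) : ∫ x in (0:ℝ)..π, Gfun n v x = π := by
  have hint : ∀ (j k : Fin n), IntervalIntegrable
      (fun x => v j * v k * Real.cos (((j:ℝ) - (k:ℝ)) * x)) volume 0 π := by
    intro j k
    exact (Continuous.intervalIntegrable (by fun_prop) _ _)
  calc ∫ x in (0:ℝ)..π, Gfun n v x
      = ∫ x in (0:ℝ)..π, ∑ j, ∑ k, v j * v k * Real.cos (((j:ℝ) - (k:ℝ)) * x) := by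
        refine intervalIntegral.integral_congr fun x _ => (Gfun_eq n v x).symm
    _ = ∑ j, ∑ k, ∫ x in (0:ℝ)..π, v j * v k * Real.cos (((j:ℝ) - (k:ℝ)) * x) := by
        rw [intervalIntegral.integral_finset_sum
          (fun j _ => (Continuous.intervalIntegrable (by fun_prop) _ _))]
        exact Finset.sum_congr rfl fun j _ => by
          rw [intervalIntegral.integral_finset_sum (fun k _ => hint j k)]
    _ = ∑ j, ∑ k, if j = k then v j * v k * π else 0 := by
        refine Finset.sum_congr rfl fun j _ => Finset.sum_congr rfl fun k _ => ?_
        rw [intervalIntegral.integral_const_mul, int_cos_aux]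
        by_cases h : j = k
        · simp [h]
        · simp [Fin.val_eq_val, h]
    _ = π := by
        simp only [Finset.sum_ite_eq, Finset.mem_univ, if_true]
        calc ∑ x : Fin n, v x * v x * π = (∑ x, v x ^ 2) * π := by
              rw [Finset.sum_mul]; exact Finset.sum_congr rfl fun j _ => by ring
          _ = π := by rw [hv, one_mul]

end

section main

lemma Gf_int {n : ℕ} (v : Fin n → ℝ) {f : ℝ → ℝ}
    (hf_int : IntervalIntegrable f volume (-π) π) :
    IntervalIntegrable (fun lam => Gfun n v lam * f lam) volume (-π) π :=
  hf_int.continuousOn_mul (Gfun_cont n v).continuousOn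

lemma Gf_int_sub {n : ℕ} (v : Fin n → ℝ) {f : ℝ → ℝ}
    (hf_int : IntervalIntegrable f volume (-π) π)
    {a b : ℝ} (ha : a ∈ Set.uIcc (-π) π) (hb : b ∈ Set.uIcc (-π) π) :
    IntervalIntegrable (fun lam => Gfun n v lam * f lam) volume a b :=
  (Gf_int v hf_int).mono_set (Set.uIcc_subset_uIcc ha hb)

lemma II_sum {ι : Type*} (s : Finset ι) {F : ι → ℝ → ℝ} {a b : ℝ}
    (h : ∀ i ∈ s, IntervalIntegrable (F i) volume a b) :
    IntervalIntegrable (fun x => ∑ i ∈ s, F i x) volume a b := by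
  have e : (∑ i ∈ s, F i) = fun x => ∑ i ∈ s, F i x := by
    ext x; simp
  exact e ▸ IntervalIntegrable.sum s h

lemma quad_eq {n : ℕ} (v : Fin n → ℝ) {f : ℝ → ℝ}
    (hf_int : IntervalIntegrable f volume (-π) π) :
    ∑ j : Fin n, v j * ∑ k : Fin n, ((1 / (2 * π)) * ∫ lam in (-π)..π,
        Real.cos (((j:ℝ) - (k:ℝ)) * lam) * f lam) * v k
      = (1 / (2 * π)) * ∫ lam in (-π)..π, Gfun n v lam * f lam := by
  have hint : ∀ j k : Fin n, IntervalIntegrable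
      (fun lam => v j * v k * (Real.cos (((j:ℝ) - (k:ℝ)) * lam) * f lam)) volume (-π) π :=
    fun j k => (hf_int.continuousOn_mul (Continuous.continuousOn (by fun_prop))).const_mul _
  have hswap : (∫ lam in (-π)..π,
        ∑ j : Fin n, ∑ k : Fin n, v j * v k * (Real.cos (((j:ℝ) - (k:ℝ)) * lam) * f lam))
      = ∑ j : Fin n, ∑ k : Fin n, ∫ lam in (-π)..π,
          v j * v k * (Real.cos (((j:ℝ) - (k:ℝ)) * lam) * f lam) := by
    rw [intervalIntegral.integral_finset_sum (fun j _ => II_sum _ (fun k _ => hint j k))]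
    exact Finset.sum_congr rfl fun j _ => by
      rw [intervalIntegral.integral_finset_sum (fun k _ => hint j k)]
  calc ∑ j : Fin n, v j * ∑ k : Fin n, ((1 / (2 * π)) * ∫ lam in (-π)..π,
        Real.cos (((j:ℝ) - (k:ℝ)) * lam) * f lam) * v k
      = ∑ j : Fin n, ∑ k : Fin n, (1 / (2 * π)) * ∫ lam in (-π)..π,
          v j * v k * (Real.cos (((j:ℝ) - (k:ℝ)) * lam) * f lam) := by
        refine Finset.sum_congr rfl fun j _ => ?_
        rw [Finset.mul_sum]
        refine Finset.sum_congr rfl fun k _ => ?_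
        rw [intervalIntegral.integral_const_mul]
        ring
    _ = (1 / (2 * π)) * ∑ j : Fin n, ∑ k : Fin n, ∫ lam in (-π)..π,
          v j * v k * (Real.cos (((j:ℝ) - (k:ℝ)) * lam) * f lam) := by
        rw [Finset.mul_sum]
        exact Finset.sum_congr rfl fun j _ => by rw [Finset.mul_sum]
    _ = (1 / (2 * π)) * ∫ lam in (-π)..π,
          ∑ j : Fin n, ∑ k : Fin n, v j * v k * (Real.cos (((j:ℝ) - (k:ℝ)) * lam) * f lam) := by
        rw [hswap]
    _ = (1 / (2 * π)) * ∫ lam in (-π)..π, Gfun n v lam * f lam := by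
        congr 1
        refine intervalIntegral.integral_congr fun lam _ => ?_
        rw [← Gfun_eq n v lam, Finset.sum_mul]
        refine Finset.sum_congr rfl fun j _ => ?_
        rw [Finset.sum_mul]
        exact Finset.sum_congr rfl fun k _ => by ring

lemma even_split {n : ℕ} (v : Fin n → ℝ) {f : ℝ → ℝ}
    (hf_int : IntervalIntegrable f volume (-π) π)
    (hf_even : ∀ lam, f (-lam) = f lam) :
    (∫ lam in (-π)..π, Gfun n v lam * f lam)
      = 2 * ∫ lam in (0:ℝ)..π, Gfun n v lam * f lam := by
  have h0 : (0:ℝ) ∈ Set.uIcc (-π) π := by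
    rw [Set.uIcc_of_le (by linarith [pi_pos])]
    exact ⟨by linarith [pi_pos], le_of_lt pi_pos⟩
  have hmem : ∀ x : ℝ, x ∈ Set.uIcc (-π) π → x ∈ Set.uIcc (-π) π := fun x h => h
  have hneg : (∫ lam in (-π)..(0:ℝ), Gfun n v lam * f lam)
      = ∫ lam in (0:ℝ)..π, Gfun n v lam * f lam := by
    have := intervalIntegral.integral_comp_neg (a := (0:ℝ)) (b := π)
      (fun lam => Gfun n v lam * f lam)
    rw [neg_zero] at this
    rw [← this]
    refine intervalIntegral.integral_congr fun lam _ => ?_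
    simp only [Gfun_even, hf_even]
  have hsplit := intervalIntegral.integral_add_adjacent_intervals
    (Gf_int_sub v hf_int Set.left_mem_uIcc h0)
    (Gf_int_sub v hf_int h0 Set.right_mem_uIcc)
  rw [← hsplit, hneg]
  ring

end main

lemma key_bound {n : ℕ} (hn : 0 < n) {f : ℝ → ℝ}
    (hf_nonneg : ∀ lam, 0 ≤ f lam) (hf_even : ∀ lam, f (-lam) = f lam)
    (hf_int : IntervalIntegrable f volume (-π) π)
    (v : Fin n → ℝ) (hv : ∑ j, v j ^ 2 = 1) :
    (1 - 1 / π) * sInf (f '' Set.Icc (1 / (n : ℝ)) π) ≤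
      ∑ j : Fin n, v j * ∑ k : Fin n, ((1 / (2 * π)) * ∫ lam in (-π)..π,
        Real.cos (((j:ℝ) - (k:ℝ)) * lam) * f lam) * v k := by
  have hπ := pi_pos
  have hn1 : (1:ℝ) ≤ (n:ℝ) := by exact_mod_cast hn
  have h1n_pos : (0:ℝ) < 1 / n := by positivity
  have h1n_le : 1 / (n:ℝ) ≤ π := le_trans (by
    rw [div_le_one (by positivity)]; exact hn1) (by linarith [pi_gt_three])
  set m := sInf (f '' Set.Icc (1 / (n : ℝ)) π) with hm
  have hbdd : BddBelow (f '' Set.Icc (1 / (n : ℝ)) π) :=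
    ⟨0, by rintro _ ⟨y, _, rfl⟩; exact hf_nonneg y⟩
  have hm0 : 0 ≤ m :=
    Real.sInf_nonneg (by rintro _ ⟨y, _, rfl⟩; exact hf_nonneg y)
  have hmle : ∀ x ∈ Set.Icc (1 / (n:ℝ)) π, m ≤ f x :=
    fun x hx => csInf_le hbdd (Set.mem_image_of_mem f hx)
  -- memberships in uIcc (-π) π
  have huIcc : Set.uIcc (-π) π = Set.Icc (-π) π := Set.uIcc_of_le (by linarith)
  have h0mem : (0:ℝ) ∈ Set.uIcc (-π) π := by rw [huIcc]; exact ⟨by linarith, by linarith⟩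
  have h1nmem : (1:ℝ) / n ∈ Set.uIcc (-π) π := by
    rw [huIcc]; exact ⟨by linarith, h1n_le⟩
  have hπmem : π ∈ Set.uIcc (-π) π := Set.right_mem_uIcc
  -- Integral facts for G
  have IA : ∫ x in (0:ℝ)..π, Gfun n v x = π := Gfun_integral n v hv
  have IB : ∫ x in (0:ℝ)..(1/n), Gfun n v x ≤ 1 := by
    have := intervalIntegral.integral_mono_on (μ := volume) (le_of_lt h1n_pos)
      (((Gfun_cont n v)).intervalIntegrable _ _)
      (_root_.intervalIntegrable_const (c := (n:ℝ)))
      (fun x _ => Gfun_le n v hv x)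
    rw [intervalIntegral.integral_const, smul_eq_mul, sub_zero, one_div,
      inv_mul_cancel₀ (by positivity : (n:ℝ) ≠ 0)] at this
    simpa using this
  have IC : (∫ x in (0:ℝ)..(1/n), Gfun n v x) + ∫ x in (1/n:ℝ)..π, Gfun n v x = π := by
    rw [intervalIntegral.integral_add_adjacent_intervals
      (((Gfun_cont n v)).intervalIntegrable _ _) (((Gfun_cont n v)).intervalIntegrable _ _), IA]
  have ID : π - 1 ≤ ∫ x in (1/n:ℝ)..π, Gfun n v x := by linarith
  -- Integral facts for G * f
  have IGf01 : (0:ℝ) ≤ ∫ x in (0:ℝ)..(1/n), Gfun n v x * f x :=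
    intervalIntegral.integral_nonneg (le_of_lt h1n_pos)
      (fun x _ => mul_nonneg (Gfun_nonneg n v x) (hf_nonneg x))
  have IE : m * (π - 1) ≤ ∫ x in (1/n:ℝ)..π, Gfun n v x * f x := by
    have step1 : m * (π - 1) ≤ m * ∫ x in (1/n:ℝ)..π, Gfun n v x :=
      mul_le_mul_of_nonneg_left ID hm0
    have step2 : m * ∫ x in (1/n:ℝ)..π, Gfun n v x ≤ ∫ x in (1/n:ℝ)..π, Gfun n v x * f x := by
      rw [← intervalIntegral.integral_const_mul]
      refine intervalIntegral.integral_mono_on h1n_le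
        ((continuous_const.mul (Gfun_cont n v)).intervalIntegrable _ _)
        (Gf_int_sub v hf_int h1nmem hπmem) (fun x hx => ?_)
      calc m * Gfun n v x = Gfun n v x * m := mul_comm _ _
        _ ≤ Gfun n v x * f x := mul_le_mul_of_nonneg_left (hmle x hx) (Gfun_nonneg n v x)
    linarith
  have IGfsplit : (∫ x in (0:ℝ)..π, Gfun n v x * f x)
      = (∫ x in (0:ℝ)..(1/n), Gfun n v x * f x) + ∫ x in (1/n:ℝ)..π, Gfun n v x * f x :=
    (intervalIntegral.integral_add_adjacent_intervals
      (Gf_int_sub v hf_int h0mem h1nmem) (Gf_int_sub v hf_int h1nmem hπmem)).symm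
  have IFin : m * (π - 1) ≤ ∫ x in (0:ℝ)..π, Gfun n v x * f x := by linarith
  -- assemble
  rw [quad_eq v hf_int, even_split v hf_int hf_even]
  have heq : (1 / (2 * π)) * (2 * ∫ x in (0:ℝ)..π, Gfun n v x * f x)
      = (1 / π) * ∫ x in (0:ℝ)..π, Gfun n v x * f x := by
    field_simp
  rw [heq]
  have : (1 - 1 / π) * m = (1 / π) * (m * (π - 1)) := by
    field_simp
  rw [this]
  exact mul_le_mul_of_nonneg_left IFin (by positivity)

/-- Lower bound for the smallest eigenvalue of the Toeplitz covariance matrix of a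
stationary process with spectral density `f`. -/
theorem toeplitz_min_eigenvalue_lower_bound
    (n : ℕ) (hn : 0 < n) (f : ℝ → ℝ)
    (hf_nonneg : ∀ lam, 0 ≤ f lam)
    (hf_even : ∀ lam, f (-lam) = f lam)
    (hf_int : IntervalIntegrable f volume (-π) π)
    (C : Matrix (Fin n) (Fin n) ℝ)
    (hC : ∀ j k : Fin n,
      C j k = (1 / (2 * π)) * ∫ lam in (-π)..π,
        Real.cos (((j : ℝ) - (k : ℝ)) * lam) * f lam)
    (hHerm : C.IsHermitian) :
    ∀ i : Fin n,
      (1 - 1 / π) * sInf (f '' Set.Icc (1 / (n : ℝ)) π) ≤ hHerm.eigenvalues i := by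
  intro i
  set v : Fin n → ℝ := ⇑(hHerm.eigenvectorBasis i) with hvdef
  have hv : ∑ j, v j ^ 2 = 1 := by
    have h1 := hHerm.eigenvectorBasis.orthonormal.1 i
    rw [EuclideanSpace.norm_eq] at h1
    have h2 : ∑ j, v j ^ 2 = ∑ j, ‖v j‖ ^ 2 := by
      simp [Real.norm_eq_abs, sq_abs]
    rw [h2]
    have h3 : 0 ≤ ∑ j, ‖v j‖ ^ 2 := Finset.sum_nonneg fun j _ => sq_nonneg _
    have h1' : √(∑ j, ‖v j‖ ^ 2) = 1 := h1
    nlinarith [Real.sq_sqrt h3, h1']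
  have heig := hHerm.eigenvalues_eq i
  rw [heig]
  have hdp : dotProduct (star v) (Matrix.mulVec C v)
      = ∑ j : Fin n, v j * ∑ k : Fin n, ((1 / (2 * π)) * ∫ lam in (-π)..π,
          Real.cos (((j:ℝ) - (k:ℝ)) * lam) * f lam) * v k := by
    simp only [dotProduct, Matrix.mulVec, Pi.star_apply, star_trivial]
    refine Finset.sum_congr rfl fun j _ => ?_
    congr 1
    refine Finset.sum_congr rfl fun k _ => ?_
    rw [hC j k]
  rw [hdp]
  simpa using key_bound hn hf_nonneg hf_even hf_int v hv
end

section
/- Let H be a reproducing kernel Hilbert space of functions on a set T with kernel K, and let P_f denote the law of the Gaussian shift f + X where X is the centered Gaussian process with covariance K, so that dP_f/dP_0 = exp(Uf − ‖f‖_H²/2) where U is the iso-Gaussian process with E[(Uh)(Ug)] = ⟨h,g⟩_H. Then for f, g ∈ H, the Kullback–Leibler divergence satisfies d_KL(P_f, P_g) = (1/2)‖f − g‖_H². -/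
open MeasureTheory ProbabilityTheory

open Real
open scoped NNReal ENNReal RealInnerProductSpace

section Helpers

lemma gauss_pdf_exp_mul (v : ℝ≥0) (hv : v ≠ 0) (x : ℝ) :
    Real.exp x * gaussianPDFReal 0 v x = Real.exp (v / 2) * gaussianPDFReal (v : ℝ) v x := by
  have hv' : (0:ℝ) < v := lt_of_le_of_ne v.coe_nonneg (by exact_mod_cast hv.symm)
  simp only [gaussianPDFReal, sub_zero]
  rw [mul_left_comm, mul_comm (Real.exp x), ← Real.exp_add, mul_left_comm, ← Real.exp_add]
  congr 1
  field_simp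
  ring

lemma gauss_exp_int (v : ℝ≥0) :
    Integrable Real.exp (gaussianReal 0 v) ∧
      ∫ x, Real.exp x ∂(gaussianReal 0 v) = Real.exp (v / 2) := by
  by_cases hv : v = 0
  · subst hv
    refine ⟨?_, by simp [gaussianReal_zero_var, integral_dirac]⟩
    rw [gaussianReal_zero_var]
    exact (integrable_const (rexp 0)).congr ((MeasureTheory.ae_dirac_iff (measurableSet_eq_fun measurable_const Real.measurable_exp)).2 rfl)
  · rw [gaussianReal_of_var_ne_zero _ hv, gaussianPDF_def]
    have hmeas : Measurable fun x => (gaussianPDFReal 0 v x).toNNReal :=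
      (measurable_gaussianPDFReal 0 v).real_toNNReal
    have hrw : (fun x => ENNReal.ofReal (gaussianPDFReal 0 v x))
        = fun x => ((gaussianPDFReal 0 v x).toNNReal : ℝ≥0∞) := rfl
    rw [hrw]
    constructor
    · rw [integrable_withDensity_iff_integrable_smul hmeas]
      have : (fun x => (gaussianPDFReal 0 v x).toNNReal • Real.exp x)
          = fun x => Real.exp (v / 2) * gaussianPDFReal (v : ℝ) v x := by
        ext x
        rw [NNReal.smul_def, Real.coe_toNNReal _ (gaussianPDFReal_nonneg 0 v x), smul_eq_mul,
          mul_comm, gauss_pdf_exp_mul v hv]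
      rw [this]
      exact (integrable_gaussianPDFReal _ _).const_mul _
    · rw [integral_withDensity_eq_integral_smul hmeas]
      have : (fun x => (gaussianPDFReal 0 v x).toNNReal • Real.exp x)
          = fun x => Real.exp (v / 2) * gaussianPDFReal (v : ℝ) v x := by
        ext x
        rw [NNReal.smul_def, Real.coe_toNNReal _ (gaussianPDFReal_nonneg 0 v x), smul_eq_mul,
          mul_comm, gauss_pdf_exp_mul v hv]
      rw [this, integral_const_mul, integral_gaussianPDFReal_eq_one _ hv, mul_one]

variable {H : Type*} [NormedAddCommGroup H] [InnerProductSpace ℝ H]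
    {Ω : Type*} [MeasurableSpace Ω] {P₀ : Measure Ω} [IsProbabilityMeasure P₀]
    {U : H →ₗ[ℝ] (Ω → ℝ)}

open scoped RealInnerProductSpace

lemma exp_U_integrable (hmeas : ∀ h : H, Measurable (U h))
    (hlaw : ∀ h : H, Measure.map (U h) P₀ = gaussianReal 0 (‖h‖₊ ^ 2)) (k : H) :
    Integrable (fun ω => rexp (U k ω)) P₀ := by
  have h1 : Integrable rexp (Measure.map (U k) P₀) := by
    rw [hlaw k]; exact (gauss_exp_int _).1
  exact (integrable_map_measure measurable_exp.aestronglyMeasurable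
    (hmeas k).aemeasurable).mp h1

lemma exp_U_integral (hmeas : ∀ h : H, Measurable (U h))
    (hlaw : ∀ h : H, Measure.map (U h) P₀ = gaussianReal 0 (‖h‖₊ ^ 2)) (k : H) :
    ∫ ω, rexp (U k ω) ∂P₀ = rexp (‖k‖ ^ 2 / 2) := by
  rw [← integral_map (hmeas k).aemeasurable measurable_exp.aestronglyMeasurable, hlaw k,
    (gauss_exp_int _).2]
  norm_num [NNReal.coe_pow]

lemma U_mul_exp_key (hmeas : ∀ h : H, Measurable (U h))
    (hlaw : ∀ h : H, Measure.map (U h) P₀ = gaussianReal 0 (‖h‖₊ ^ 2)) (f h : H) :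
    Integrable (fun ω => U h ω * rexp (U f ω)) P₀ ∧
      ∫ ω, U h ω * rexp (U f ω) ∂P₀ = ⟪f, h⟫ * rexp (‖f‖ ^ 2 / 2) := by
  set F : ℝ → Ω → ℝ := fun t ω => rexp (U f ω + t * U h ω) with hF
  set F' : ℝ → Ω → ℝ := fun t ω => U h ω * rexp (U f ω + t * U h ω) with hF'
  have hUadd : ∀ (t : ℝ) (ω : Ω), U f ω + t * U h ω = U (f + t • h) ω := by
    intro t ω
    rw [map_add, LinearMap.map_smul]
    simp
  set bound : Ω → ℝ := fun ω => rexp (U (f + (2:ℝ) • h) ω) + rexp (U (f - (2:ℝ) • h) ω)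
    with hbound
  have h_bound : ∀ᵐ ω ∂P₀, ∀ t ∈ Metric.ball (0:ℝ) 1, ‖F' t ω‖ ≤ bound ω := by
    refine Filter.Eventually.of_forall fun ω => fun t ht => ?_
    have ht' : |t| ≤ 1 := le_of_lt (by simpa [Real.dist_eq] using ht)
    have h1 : ‖F' t ω‖ = |U h ω| * rexp (U f ω + t * U h ω) := by
      simp [hF', abs_mul, abs_of_pos (Real.exp_pos _)]
    rw [h1]
    have h2 : |U h ω| * rexp (U f ω + t * U h ω) ≤ rexp (U f ω + 2 * |U h ω|) := by
      have hle : rexp (U f ω + t * U h ω) ≤ rexp (U f ω + |U h ω|) := by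
        apply Real.exp_le_exp.2
        have : t * U h ω ≤ |U h ω| := by
          calc t * U h ω ≤ |t * U h ω| := le_abs_self _
          _ = |t| * |U h ω| := abs_mul _ _
          _ ≤ 1 * |U h ω| := by gcongr
          _ = |U h ω| := one_mul _
        linarith
      have habs : |U h ω| ≤ rexp (|U h ω|) := (Real.add_one_le_exp _).trans' (by linarith [abs_nonneg (U h ω)])
      calc |U h ω| * rexp (U f ω + t * U h ω)
          ≤ rexp (|U h ω|) * rexp (U f ω + |U h ω|) :=
            mul_le_mul habs hle (Real.exp_pos _).le (Real.exp_pos _).le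
        _ = rexp (U f ω + 2 * |U h ω|) := by rw [← Real.exp_add]; ring_nf
    refine h2.trans ?_
    have hU2 : U (f + (2:ℝ) • h) ω = U f ω + 2 * U h ω := by
      rw [map_add, LinearMap.map_smul]; simp
    have hU2' : U (f - (2:ℝ) • h) ω = U f ω - 2 * U h ω := by
      rw [map_sub, LinearMap.map_smul]; simp
    rcases abs_cases (U h ω) with ⟨he, _⟩ | ⟨he, _⟩
    · rw [he]
      calc rexp (U f ω + 2 * U h ω) = rexp (U (f + (2:ℝ) • h) ω) := by rw [hU2]
        _ ≤ bound ω := le_add_of_nonneg_right (Real.exp_pos _).le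
    · rw [he]
      calc rexp (U f ω + 2 * -U h ω) = rexp (U (f - (2:ℝ) • h) ω) := by rw [hU2']; ring_nf
        _ ≤ bound ω := le_add_of_nonneg_left (Real.exp_pos _).le
  have bound_int : Integrable bound P₀ :=
    (exp_U_integrable hmeas hlaw _).add (exp_U_integrable hmeas hlaw _)
  have hF_meas : ∀ᶠ t in nhds (0:ℝ), AEStronglyMeasurable (F t) P₀ :=
    Filter.Eventually.of_forall fun t =>
      (((hmeas f).add ((hmeas h).const_mul t)).exp).aestronglyMeasurable
  have hF_int : Integrable (F 0) P₀ := by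
    have : F 0 = fun ω => rexp (U f ω) := by ext ω; simp [hF]
    rw [this]; exact exp_U_integrable hmeas hlaw f
  have hF'_meas : AEStronglyMeasurable (F' 0) P₀ :=
    ((hmeas h).mul (((hmeas f).add ((hmeas h).const_mul 0)).exp)).aestronglyMeasurable
  have h_diff : ∀ᵐ ω ∂P₀, ∀ t ∈ Metric.ball (0:ℝ) 1, HasDerivAt (F · ω) (F' t ω) t := by
    refine Filter.Eventually.of_forall fun ω t _ => ?_
    have : HasDerivAt (fun t : ℝ => U f ω + t * U h ω) (U h ω) t :=
      (hasDerivAt_mul_const (U h ω)).const_add (U f ω)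
    simpa [hF, hF', mul_comm] using this.exp
  obtain ⟨hint, hderiv⟩ := hasDerivAt_integral_of_dominated_loc_of_deriv_le (Metric.ball_mem_nhds 0 one_pos)
    hF_meas hF_int hF'_meas h_bound bound_int h_diff
  have hint' : Integrable (fun ω => U h ω * rexp (U f ω)) P₀ := by
    have : F' 0 = fun ω => U h ω * rexp (U f ω) := by ext ω; simp [hF']
    rwa [this] at hint
  refine ⟨hint', ?_⟩
  -- the integral ∫ F t equals exp(‖f + t h‖²/2)
  have hval : ∀ t : ℝ, ∫ ω, F t ω ∂P₀ = rexp (‖f + t • h‖ ^ 2 / 2) := by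
    intro t
    have : F t = fun ω => rexp (U (f + t • h) ω) := by
      ext ω; rw [hF]; simp only [hUadd]
    rw [this, exp_U_integral hmeas hlaw]
  have heq : (fun t : ℝ => ∫ ω, F t ω ∂P₀)
      = fun t : ℝ => rexp ((‖f‖ ^ 2 + 2 * (t * ⟪f, h⟫) + t ^ 2 * ‖h‖ ^ 2) / 2) := by
    ext t
    rw [hval t]
    congr 2
    rw [norm_add_sq_real, real_inner_smul_right, norm_smul]
    simp [mul_pow]
  rw [heq] at hderiv
  have hderiv2 : HasDerivAt
      (fun t : ℝ => rexp ((‖f‖ ^ 2 + 2 * (t * ⟪f, h⟫) + t ^ 2 * ‖h‖ ^ 2) / 2))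
      (⟪f, h⟫ * rexp (‖f‖ ^ 2 / 2)) 0 := by
    have hp : HasDerivAt (fun t : ℝ => (‖f‖ ^ 2 + 2 * (t * ⟪f, h⟫) + t ^ 2 * ‖h‖ ^ 2) / 2)
        (⟪f, h⟫) 0 := by
      have h1 : HasDerivAt (fun t : ℝ => ‖f‖ ^ 2 + 2 * (t * ⟪f, h⟫) + t ^ 2 * ‖h‖ ^ 2)
          (2 * ⟪f, h⟫) 0 := by
        have ha : HasDerivAt (fun t : ℝ => 2 * (t * ⟪f, h⟫)) (2 * ⟪f, h⟫) 0 :=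
          ((hasDerivAt_mul_const ⟪f, h⟫).const_mul 2)
        have hb : HasDerivAt (fun t : ℝ => t ^ 2 * ‖h‖ ^ 2) 0 0 := by
          have := (hasDerivAt_pow 2 (0:ℝ)).mul_const (‖h‖ ^ 2)
          simpa using this
        have h3 := (ha.const_add (‖f‖ ^ 2)).add hb
        rwa [add_zero] at h3
      simpa [mul_div_assoc] using h1.div_const 2
    have := hp.exp
    simpa [mul_comm] using this
  have := hderiv.unique hderiv2
  have hF'0 : F' 0 = fun ω => U h ω * rexp (U f ω) := by ext ω; simp [hF']
  rw [← hF'0, ← this]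

end Helpers

/-- KL divergence between Gaussian shifts `P_f` and `P_g`, where
`dP_f/dP₀ = exp(Uf - ‖f‖²/2)` and `U` is the iso-Gaussian process of the RKHS `H`:
`d_KL(P_f, P_g) = ‖f - g‖²/2`. -/
theorem kl_gaussian_shift_rkhs
    {H : Type*} [NormedAddCommGroup H] [InnerProductSpace ℝ H]
    {Ω : Type*} [MeasurableSpace Ω] (P₀ : Measure Ω) [IsProbabilityMeasure P₀]
    (U : H →ₗ[ℝ] (Ω → ℝ))
    (hmeas : ∀ h : H, Measurable (U h))
    (hlaw : ∀ h : H, Measure.map (U h) P₀ = gaussianReal 0 (‖h‖₊ ^ 2))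
    (f g : H) :
    ∫ ω, Real.log
        (Real.exp (U f ω - ‖f‖ ^ 2 / 2) / Real.exp (U g ω - ‖g‖ ^ 2 / 2))
      ∂(P₀.withDensity (fun ω => ENNReal.ofReal (Real.exp (U f ω - ‖f‖ ^ 2 / 2))))
      = ‖f - g‖ ^ 2 / 2 := by
  set c : ℝ := ‖f‖ ^ 2 / 2 with hc
  set c' : ℝ := ‖g‖ ^ 2 / 2 with hc'
  have hlog : ∀ ω, Real.log (Real.exp (U f ω - c) / Real.exp (U g ω - c'))
      = (U f ω - c) - (U g ω - c') := by
    intro ω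
    rw [← Real.exp_sub, Real.log_exp]
  simp_rw [hlog]
  have hdmeas : Measurable fun ω => (Real.exp (U f ω - c)).toNNReal :=
    (((hmeas f).sub_const c).exp).real_toNNReal
  have hmeq : (fun ω => ENNReal.ofReal (Real.exp (U f ω - c)))
      = fun ω => ((Real.exp (U f ω - c)).toNNReal : ℝ≥0∞) := rfl
  rw [hmeq, integral_withDensity_eq_integral_smul hdmeas]
  have hptw : (fun ω => (Real.exp (U f ω - c)).toNNReal • ((U f ω - c) - (U g ω - c')))
      = fun ω => Real.exp (-c) * (U (f - g) ω * Real.exp (U f ω))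
        + (Real.exp (-c) * (c' - c)) * Real.exp (U f ω) := by
    ext ω
    rw [NNReal.smul_def, Real.coe_toNNReal _ (Real.exp_pos _).le, smul_eq_mul, map_sub]
    simp only [Pi.sub_apply]
    rw [show U f ω - c = U f ω + (-c) by ring, Real.exp_add]
    ring
  rw [hptw, integral_add (((U_mul_exp_key hmeas hlaw f (f - g)).1).const_mul _)
      ((exp_U_integrable hmeas hlaw f).const_mul _),
    integral_const_mul, integral_const_mul, (U_mul_exp_key hmeas hlaw f (f - g)).2,
    exp_U_integral hmeas hlaw f]
  have hcc : Real.exp (‖f‖ ^ 2 / 2) = Real.exp c := by rw [hc]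
  have hee : Real.exp (-c) * Real.exp c = 1 := by
    rw [← Real.exp_add, neg_add_cancel, Real.exp_zero]
  have h1 : ⟪f, f - g⟫ = ‖f‖ ^ 2 - ⟪f, g⟫ := by
    rw [inner_sub_right, real_inner_self_eq_norm_sq]
  have h2 : ‖f - g‖ ^ 2 = ‖f‖ ^ 2 - 2 * ⟪f, g⟫ + ‖g‖ ^ 2 := by
    rw [norm_sub_sq_real]
  rw [hcc, h1, h2]
  linear_combination (‖f‖ ^ 2 - ⟪f, g⟫ + c' - c) * hee + hc' - hc
end

section
/- Let H ∈ (0,1), c_H = sin(πH)Γ(2H+1), and μ(dλ) = (c_H/2π)|λ|^{1−2H} dλ. For k ∈ ℤ, the squared L²(μ)-norm of the function λ ↦ e^{2πikλ} restricted via ‖e^{2πik·}‖² := (c_H/2π)∫_{−∞}^{∞} |F(e^{2πik·}𝟙_{[0,1]})(λ)|² |λ|^{1−2H} dλ is finite and of order |k|^{1−2H}: there exist constants 0 < c ≤ C < ∞ depending only on H such that c(1+|k|)^{1−2H} ≤ ‖e^{2πik·}‖² ≤ C(1+|k|)^{1−2H} for all k ∈ ℤ. -/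
open Real MeasureTheory Complex

lemma two_sub_two_cos_le (a : ℝ) : 2 - 2 * Real.cos a ≤ a ^ 2 := by
  have h1 : Real.sin (a/2) ^ 2 ≤ (a/2)^2 := Real.sin_sq_le_sq
  have h2 := Real.sin_sq_eq_half_sub (a/2)
  rw [show 2*(a/2) = a by ring] at h2
  nlinarith

lemma abs_exp_integral_sq {a : ℝ} (ha : a ≠ 0) :
    ‖(∫ x in (0:ℝ)..1, Complex.exp (Complex.I * (a:ℂ) * (x:ℝ)))‖ ^ 2
      = (2 - 2 * Real.cos a) / a ^ 2 := by
  have hc : (Complex.I * (a:ℂ)) ≠ 0 :=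
    mul_ne_zero Complex.I_ne_zero (by exact_mod_cast ha)
  rw [integral_exp_mul_complex hc]
  rw [Complex.ofReal_one, Complex.ofReal_zero, mul_one, mul_zero, Complex.exp_zero]
  rw [norm_div, norm_mul, Complex.norm_I, Complex.norm_real, Real.norm_eq_abs, one_mul, div_pow, Complex.sq_norm]
  congr 1
  have he : Complex.exp (Complex.I * (a:ℂ)) = Complex.cos a + Complex.sin a * Complex.I := by
    rw [mul_comm, Complex.exp_mul_I]
  rw [← Complex.sq_norm, Complex.sq_norm, he]
  simp [Complex.normSq_apply, Complex.cos_ofReal_re, Complex.sin_ofReal_re,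
    Complex.cos_ofReal_im, Complex.sin_ofReal_im]
  nlinarith [Real.sin_sq_add_cos_sq a]
  exact sq_abs a

lemma tail_lemma {γ : ℝ} (hγ : γ < -1) {R : ℝ} (hR : 0 < R) (b : ℝ) :
    Integrable (Set.indicator {x : ℝ | R < |x - b|} (fun x : ℝ => |x - b| ^ γ)) ∧
    ∫ x, Set.indicator {x : ℝ | R < |x - b|} (fun x : ℝ => |x - b| ^ γ) x
      = 2 * (R ^ (γ + 1) / (-(γ + 1))) := by
  set f : ℝ → ℝ := Set.indicator {x : ℝ | R < |x|} (fun x => |x| ^ γ) with hf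
  -- right piece
  have hIoi : IntegrableOn (fun x : ℝ => |x| ^ γ) (Set.Ioi R) :=
    (integrableOn_Ioi_rpow_of_lt hγ hR).congr_fun
      (fun x hx => by rw [abs_of_pos (hR.trans hx)]) measurableSet_Ioi
  have hR_int : Integrable (Set.indicator (Set.Ioi R) (fun x : ℝ => |x| ^ γ)) :=
    (integrable_indicator_iff measurableSet_Ioi).2 hIoi
  have hL_eq : (fun x : ℝ => Set.indicator (Set.Ioi R) (fun y : ℝ => |y| ^ γ) (-x))
      = Set.indicator (Set.Iio (-R)) (fun y : ℝ => |y| ^ γ) := by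
    funext x
    by_cases h : R < -x
    · rw [Set.indicator_of_mem (by simpa using h),
        Set.indicator_of_mem (by simp [Set.mem_Iio]; linarith), abs_neg]
    · rw [Set.indicator_of_notMem (by simpa using h),
        Set.indicator_of_notMem (by simp only [Set.mem_Iio, not_lt]; linarith [not_lt.1 h])]
  have hL_int : Integrable (Set.indicator (Set.Iio (-R)) (fun y : ℝ => |y| ^ γ)) := by
    rw [← hL_eq]; exact hR_int.comp_neg
  have hset : {x : ℝ | R < |x|} = Set.Iio (-R) ∪ Set.Ioi R := by
    ext x
    simp only [Set.mem_setOf_eq, Set.mem_union, Set.mem_Iio, Set.mem_Ioi, lt_abs]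
    constructor
    · rintro (h | h); · right; exact h
      · left; linarith
    · rintro (h | h); · right; linarith
      · left; exact h
  have hdisj : Disjoint (Set.Iio (-R)) (Set.Ioi R) := by
    apply Set.disjoint_left.mpr
    intro x hx hx'
    simp only [Set.mem_Iio, Set.mem_Ioi] at hx hx'
    linarith
  have hf_eq : f = fun x => Set.indicator (Set.Iio (-R)) (fun y : ℝ => |y| ^ γ) x
      + Set.indicator (Set.Ioi R) (fun y : ℝ => |y| ^ γ) x := by
    rw [hf, hset, Set.indicator_union_of_disjoint hdisj]
  have hf_int : Integrable f := by rw [hf_eq]; exact hL_int.add hR_int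
  have hRval : ∫ x, Set.indicator (Set.Ioi R) (fun y : ℝ => |y| ^ γ) x
      = R ^ (γ + 1) / (-(γ + 1)) := by
    rw [MeasureTheory.integral_indicator measurableSet_Ioi]
    rw [setIntegral_congr_fun measurableSet_Ioi
      (fun x hx => by rw [abs_of_pos (hR.trans hx)] : Set.EqOn _ (fun x : ℝ => x ^ γ) _)]
    rw [integral_Ioi_rpow_of_lt hγ hR]
    rw [neg_div, div_neg]
  have hf_val : ∫ x, f x = 2 * (R ^ (γ + 1) / (-(γ + 1))) := by
    rw [hf_eq, integral_add hL_int hR_int]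
    have : ∫ x, Set.indicator (Set.Iio (-R)) (fun y : ℝ => |y| ^ γ) x
        = ∫ x, Set.indicator (Set.Ioi R) (fun y : ℝ => |y| ^ γ) x := by
      rw [← hL_eq, MeasureTheory.integral_neg_eq_self]
    rw [this, hRval]; ring
  -- shift
  have hshift : (fun x => f (x - b))
      = Set.indicator {x : ℝ | R < |x - b|} (fun x : ℝ => |x - b| ^ γ) := by
    funext x
    by_cases h : R < |x - b|
    · rw [Set.indicator_of_mem (show x ∈ {y : ℝ | R < |y - b|} from h)]
      exact Set.indicator_of_mem (show (x - b) ∈ {y : ℝ | R < |y|} from h) _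
    · rw [Set.indicator_of_notMem (show x ∉ {y : ℝ | R < |y - b|} from h)]
      exact Set.indicator_of_notMem (show (x - b) ∉ {y : ℝ | R < |y|} from h) _
  constructor
  · rw [← hshift]; exact hf_int.comp_sub_right b
  · rw [← hshift, MeasureTheory.integral_sub_right_eq_self f b, hf_val]

set_option maxHeartbeats 1000000 in
lemma master_bound {α : ℝ} (hα₁ : -1 < α) (hα₂ : α < 1) {t b : ℝ}
    (ht : t = 0 ∨ 1 ≤ t) (hb : |b| = 2 * π * t) :
    Integrable (fun lam : ℝ => (2 - 2 * Real.cos (b - lam)) / (b - lam) ^ 2 * |lam| ^ α) ∧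
    ((1 - Real.cos 1) / 16) * (1 + t) ^ α
      ≤ (∫ lam : ℝ, (2 - 2 * Real.cos (b - lam)) / (b - lam) ^ 2 * |lam| ^ α) ∧
    (∫ lam : ℝ, (2 - 2 * Real.cos (b - lam)) / (b - lam) ^ 2 * |lam| ^ α)
      ≤ ((∫ x in Set.Icc (0:ℝ) 1, |x| ^ α) + (∫ x in Set.Icc (-1:ℝ) 0, |x| ^ α)
          + 6 * π ^ 2 + 24 + 24 / (1 - max α 0)) * (1 + t) ^ α := by
  have hπ : (0:ℝ) < π := Real.pi_pos
  have hπ3 : (3:ℝ) < π := Real.pi_gt_three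
  have hπ4 : π < 4 := by
    have := Real.pi_lt_d2; linarith
  have ht0 : 0 ≤ t := by
    rcases ht with rfl | h
    · exact le_refl 0
    · linarith
  set β : ℝ := max α 0 with hβdef
  have hβ0 : 0 ≤ β := le_max_right _ _
  have hβ1 : β < 1 := max_lt hα₂ one_pos
  have hβγ : β - 2 < -1 := by linarith
  have hβα : β - 1 ≤ α := by
    rcases max_cases α 0 with ⟨h, _⟩ | ⟨h, _⟩ <;> rw [hβdef, h] <;> linarith
  set K : ℝ := 1 + t with hKdef
  have hK1 : (1:ℝ) ≤ K := by rw [hKdef]; linarith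
  have hK0 : (0:ℝ) < K := by linarith
  have hKα : (0:ℝ) < K ^ α := Real.rpow_pos_of_pos hK0 α
  set G : ℝ → ℝ := fun lam => (2 - 2 * Real.cos (b - lam)) / (b - lam) ^ 2 * |lam| ^ α
    with hGdef
  have hsq_pos : ∀ a : ℝ, a ≠ 0 → 0 < a ^ 2 := fun a h =>
    lt_of_le_of_ne (sq_nonneg a) (Ne.symm (pow_ne_zero 2 h))
  have hratio_nonneg : ∀ a : ℝ, 0 ≤ (2 - 2 * Real.cos a) / a ^ 2 := fun a =>
    div_nonneg (by nlinarith [Real.cos_le_one a]) (sq_nonneg a)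
  have hratio_le_one : ∀ a : ℝ, (2 - 2 * Real.cos a) / a ^ 2 ≤ 1 := by
    intro a
    rcases eq_or_ne a 0 with rfl | h
    · simp
    · rw [div_le_one (hsq_pos a h)]; exact two_sub_two_cos_le a
  have hratio_le : ∀ a : ℝ, (2 - 2 * Real.cos a) / a ^ 2 ≤ 4 / a ^ 2 := by
    intro a
    rcases eq_or_ne a 0 with rfl | h
    · simp
    · exact (div_le_div_iff_of_pos_right (hsq_pos a h)).2 (by nlinarith [Real.neg_one_le_cos a])
  have hGnonneg : ∀ lam, 0 ≤ G lam := fun lam =>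
    mul_nonneg (hratio_nonneg _) (Real.rpow_nonneg (abs_nonneg _) _)
  -- majorant pieces
  set m1a : ℝ → ℝ := Set.indicator (Set.Icc (0:ℝ) 1) (fun x => K ^ α * |x| ^ α) with hm1adef
  set m1b : ℝ → ℝ := Set.indicator (Set.Icc (-1:ℝ) 0) (fun x => K ^ α * |x| ^ α) with hm1bdef
  set m2 : ℝ → ℝ := Set.indicator (Set.Icc (b - π) (b + π)) (fun _ => 3 * π * K ^ α)
    with hm2def
  set m3 : ℝ → ℝ := Set.indicator {x : ℝ | π < |x - b|}
    (fun x => 12 * π * K ^ α * |x - b| ^ (-2:ℝ)) with hm3def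
  set m4 : ℝ → ℝ := Set.indicator {x : ℝ | π * K < |x - b|}
    (fun x => 12 * |x - b| ^ (β - 2)) with hm4def
  -- integrability of the pieces
  have hIcc01 : IntegrableOn (fun x : ℝ => K ^ α * |x| ^ α) (Set.Icc (0:ℝ) 1) := by
    have h1 : IntegrableOn (fun x : ℝ => x ^ α) (Set.Icc (0:ℝ) 1) := by
      rw [integrableOn_Icc_iff_integrableOn_Ioc]
      exact (intervalIntegral.intervalIntegrable_rpow' hα₁ (a := 0) (b := 1)).1
    exact (h1.congr_fun (fun x hx => by rw [_root_.abs_of_nonneg hx.1]) measurableSet_Icc).const_mul _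
  have hm1a : Integrable m1a := by
    rw [hm1adef, integrable_indicator_iff measurableSet_Icc]; exact hIcc01
  have hm1b : Integrable m1b := by
    have e : (fun x : ℝ => m1a (-x)) = m1b := by
      funext x
      by_cases h : x ∈ Set.Icc (-1:ℝ) 0
      · rw [hm1bdef, Set.indicator_of_mem h]
        rw [hm1adef, Set.indicator_of_mem (by simp only [Set.mem_Icc] at h ⊢; constructor <;> linarith)]
        rw [abs_neg]
      · rw [hm1bdef, Set.indicator_of_notMem h]
        rw [hm1adef, Set.indicator_of_notMem (by
          simp only [Set.mem_Icc] at h ⊢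
          intro hc
          exact absurd ⟨by linarith [hc.2], by linarith [hc.1]⟩ h)]
    rw [← e]; exact hm1a.comp_neg
  have hm2 : Integrable m2 := by
    rw [hm2def, integrable_indicator_iff measurableSet_Icc]
    exact integrableOn_const measure_Icc_lt_top.ne
  have htail3 := tail_lemma (by norm_num : (-2:ℝ) < -1) hπ b
  have htail4 := tail_lemma hβγ (by positivity : 0 < π * K) b
  have hm3 : Integrable m3 := by
    have : m3 = fun x => (12 * π * K ^ α) *
        Set.indicator {x : ℝ | π < |x - b|} (fun x : ℝ => |x - b| ^ (-2:ℝ)) x := by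
      funext x; rw [hm3def, Set.indicator_const_mul]
    rw [this]; exact htail3.1.const_mul _
  have hm4 : Integrable m4 := by
    have : m4 = fun x => 12 *
        Set.indicator {x : ℝ | π * K < |x - b|} (fun x : ℝ => |x - b| ^ (β-2)) x := by
      funext x; rw [hm4def, Set.indicator_const_mul]
    rw [this]; exact htail4.1.const_mul _
  -- |lam|^α ≤ 3π K^α  on the middle region
  have hlamK : ∀ lam : ℝ, 1 < |lam| → |b - lam| ≤ π * K → |lam| ^ α ≤ 3 * π * K ^ α := by
    intro lam h1 h2
    rcases le_or_gt 0 α with hα0 | hα0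
    · have hlam3 : |lam| ≤ 3 * π * K := by
        have h3 : |lam| - |b| ≤ |lam - b| := abs_sub_abs_le_abs_sub lam b
        rw [abs_sub_comm] at h3
        have hKt : t ≤ K := by rw [hKdef]; linarith
        rw [hb] at h3; nlinarith
      calc |lam| ^ α ≤ (3 * π * K) ^ α :=
            Real.rpow_le_rpow (abs_nonneg _) hlam3 hα0
        _ = (3 * π) ^ α * K ^ α := Real.mul_rpow (by positivity) hK0.le
        _ ≤ (3 * π) * K ^ α := by
            have h4 : (3 * π) ^ α ≤ 3 * π := by
              calc (3 * π) ^ α ≤ (3 * π) ^ (1:ℝ) :=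
                    Real.rpow_le_rpow_of_exponent_le (by nlinarith) hα₂.le
                _ = 3 * π := Real.rpow_one _
            exact mul_le_mul_of_nonneg_right h4 hKα.le
    · have h3 : K / 3 ≤ |lam| := by
        rcases le_or_gt t 2 with ht2 | ht2
        · rw [hKdef]; linarith
        · have h5 : |b| - |b - lam| ≤ |lam| := by
            have h6 := abs_sub_abs_le_abs_sub b lam
            linarith
          rw [hb] at h5; rw [hKdef]; nlinarith
      have hK3 : (0:ℝ) < K / 3 := by linarith
      calc |lam| ^ α ≤ (K / 3) ^ α := Real.rpow_le_rpow_of_nonpos hK3 h3 hα0.le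
        _ = K ^ α / 3 ^ α := Real.div_rpow hK0.le (by norm_num : (0:ℝ) ≤ 3) α
        _ ≤ 3 * K ^ α := by
            have h31 : (1/3:ℝ) ≤ (3:ℝ) ^ α := by
              have h32 := Real.rpow_le_rpow_of_exponent_le
                (by norm_num : (1:ℝ) ≤ 3) hα₁.le
              rw [Real.rpow_neg_one] at h32
              linarith [h32]
            rw [div_le_iff₀ (by positivity : (0:ℝ) < (3:ℝ) ^ α)]
            nlinarith [h31, hKα]
        _ ≤ 3 * π * K ^ α := by nlinarith
  -- pointwise domination
  have hpt : ∀ lam : ℝ, G lam ≤ m1a lam + m1b lam + m2 lam + m3 lam + m4 lam := by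
    intro lam
    have h1a0 : 0 ≤ m1a lam := Set.indicator_nonneg (fun x _ => by positivity) lam
    have h1b0 : 0 ≤ m1b lam := Set.indicator_nonneg (fun x _ => by positivity) lam
    have h20 : 0 ≤ m2 lam := Set.indicator_nonneg (fun x _ => by positivity) lam
    have h30 : 0 ≤ m3 lam := Set.indicator_nonneg (fun x _ => by positivity) lam
    have h40 : 0 ≤ m4 lam := Set.indicator_nonneg (fun x _ => by positivity) lam
    rcases le_or_gt |lam| 1 with hlam | hlam
    · -- |lam| ≤ 1 : use m1a / m1b
      have hG1 : G lam ≤ K ^ α * |lam| ^ α := by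
        have hr : (2 - 2 * Real.cos (b - lam)) / (b - lam) ^ 2 ≤ K ^ α := by
          rcases ht with ht' | ht'
          · have hK1' : K = 1 := by rw [hKdef, ht']; ring
            rw [hK1', Real.one_rpow]; exact hratio_le_one _
          · have habs : (5/2) * K ≤ |b - lam| := by
              have h3 : |b| - |lam| ≤ |b - lam| := abs_sub_abs_le_abs_sub b lam
              rw [hb] at h3; rw [hKdef]; nlinarith
            have hane : b - lam ≠ 0 := by
              intro h0
              rw [h0, abs_zero] at habs; nlinarith
            have hsq : ((5/2) * K) ^ 2 ≤ (b - lam) ^ 2 := by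
              rw [← _root_.sq_abs (b - lam)]
              exact pow_le_pow_left₀ (by positivity) habs 2
            calc (2 - 2 * Real.cos (b - lam)) / (b - lam) ^ 2
                ≤ 4 / (b - lam) ^ 2 := hratio_le _
              _ ≤ 4 / ((5/2) * K) ^ 2 := by
                  rw [div_le_div_iff₀ (hsq_pos _ hane) (by positivity)]
                  nlinarith [hsq]
              _ ≤ (K ^ 2)⁻¹ := by
                  rw [div_le_iff₀ (by positivity)]
                  have he : (K ^ 2)⁻¹ * ((5/2) * K) ^ 2 = 25/4 := by
                    field_simp; ring
                  rw [he]; norm_num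
              _ = K ^ (-2:ℝ) := by
                  rw [Real.rpow_neg hK0.le,
                    show ((2:ℝ) = ((2:ℕ):ℝ)) by norm_num, Real.rpow_natCast]
              _ ≤ K ^ α := Real.rpow_le_rpow_of_exponent_le hK1 (by linarith)
        calc G lam = (2 - 2 * Real.cos (b - lam)) / (b - lam) ^ 2 * |lam| ^ α := rfl
          _ ≤ K ^ α * |lam| ^ α :=
              mul_le_mul_of_nonneg_right hr (Real.rpow_nonneg (abs_nonneg _) _)
      rcases le_or_gt 0 lam with h0 | h0
      · have hv : m1a lam = K ^ α * |lam| ^ α := by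
          rw [hm1adef]
          exact Set.indicator_of_mem
            (Set.mem_Icc.mpr ⟨h0, by rwa [_root_.abs_of_nonneg h0] at hlam⟩) _
        linarith
      · have hv : m1b lam = K ^ α * |lam| ^ α := by
          rw [hm1bdef]
          refine Set.indicator_of_mem (Set.mem_Icc.mpr ⟨?_, h0.le⟩) _
          rw [abs_of_neg h0] at hlam; linarith
        linarith
    · rcases le_or_gt |b - lam| π with h2c | h2c
      · -- middle bounded piece : m2
        have hmem : lam ∈ Set.Icc (b - π) (b + π) := by
          rw [abs_le] at h2c
          exact Set.mem_Icc.mpr ⟨by linarith [h2c.2], by linarith [h2c.1]⟩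
        have hv : m2 lam = 3 * π * K ^ α := by
          rw [hm2def]; exact Set.indicator_of_mem hmem _
        have hG2 : G lam ≤ 3 * π * K ^ α := by
          have h5 := hlamK lam hlam (h2c.trans (by nlinarith))
          calc G lam ≤ 1 * |lam| ^ α :=
                mul_le_mul_of_nonneg_right (hratio_le_one _) (Real.rpow_nonneg (abs_nonneg _) _)
            _ = |lam| ^ α := one_mul _
            _ ≤ 3 * π * K ^ α := h5
        linarith
      · rcases le_or_gt |b - lam| (π * K) with h3c | h3c
        · -- m3
          have hane : b - lam ≠ 0 := by
            intro h0; rw [h0, abs_zero] at h2c; linarith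
          have hv : m3 lam = 12 * π * K ^ α * |lam - b| ^ (-2:ℝ) := by
            rw [hm3def]
            exact Set.indicator_of_mem (by rw [Set.mem_setOf_eq, abs_sub_comm]; exact h2c) _
          have hinv : |lam - b| ^ (-2:ℝ) = ((b - lam) ^ 2)⁻¹ := by
            rw [Real.rpow_neg (abs_nonneg _),
              show ((2:ℝ) = ((2:ℕ):ℝ)) by norm_num, Real.rpow_natCast, _root_.sq_abs,
              show (lam - b)^2 = (b - lam)^2 by ring]
          have hG3 : G lam ≤ 12 * π * K ^ α * ((b - lam) ^ 2)⁻¹ := by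
            have h5 := hlamK lam hlam h3c
            calc G lam ≤ (4 / (b - lam) ^ 2) * (3 * π * K ^ α) := by
                  apply mul_le_mul (hratio_le _) h5 (Real.rpow_nonneg (abs_nonneg _) _)
                  positivity
              _ = 12 * π * K ^ α * ((b - lam) ^ 2)⁻¹ := by ring
          rw [hv, hinv]
          linarith
        · -- m4
          have habs0' : (0:ℝ) < |b - lam| := lt_trans (by positivity) h3c
          have hmem : lam ∈ {x : ℝ | π * K < |x - b|} := by
            rw [Set.mem_setOf_eq, abs_sub_comm]; exact h3c
          have hv : m4 lam = 12 * |lam - b| ^ (β - 2) := by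
            rw [hm4def]; exact Set.indicator_of_mem hmem _
          have hkey : |lam| ^ α ≤ 3 * |b - lam| ^ β := by
            rcases le_or_gt α 0 with hα0 | hα0
            · have hβ' : β = 0 := by rw [hβdef]; exact max_eq_right hα0
              have h6 : |lam| ^ α ≤ 1 :=
                Real.rpow_le_one_of_one_le_of_nonpos hlam.le hα0
              rw [hβ', Real.rpow_zero]; linarith
            · have hβ' : β = α := by rw [hβdef]; exact max_eq_left hα0.le
              have hlam3 : |lam| ≤ 3 * |b - lam| := by
                have h7 : |lam| - |b| ≤ |lam - b| := abs_sub_abs_le_abs_sub lam b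
                rw [abs_sub_comm] at h7
                have h8 : 2 * π * t ≤ 2 * (π * K) := by rw [hKdef]; nlinarith
                rw [hb] at h7; nlinarith
              calc |lam| ^ α ≤ (3 * |b - lam|) ^ α :=
                    Real.rpow_le_rpow (abs_nonneg _) hlam3 hα0.le
                _ = 3 ^ α * |b - lam| ^ α := Real.mul_rpow (by norm_num) (abs_nonneg _)
                _ ≤ 3 * |b - lam| ^ α := by
                    have h9 : (3:ℝ) ^ α ≤ 3 := by
                      calc (3:ℝ) ^ α ≤ (3:ℝ) ^ (1:ℝ) :=
                            Real.rpow_le_rpow_of_exponent_le (by norm_num) hα₂.le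
                        _ = 3 := Real.rpow_one _
                    exact mul_le_mul_of_nonneg_right h9 (Real.rpow_nonneg (abs_nonneg _) _)
                _ = 3 * |b - lam| ^ β := by rw [hβ']
          have hG4 : G lam ≤ 12 * |lam - b| ^ (β - 2) := by
            have hr2 : |lam - b| ^ (β - 2) = |b - lam| ^ β * ((b - lam) ^ 2)⁻¹ := by
              rw [abs_sub_comm, show β - 2 = β + (-2) by ring,
                Real.rpow_add habs0', Real.rpow_neg (abs_nonneg _),
                show ((2:ℝ) = ((2:ℕ):ℝ)) by norm_num, Real.rpow_natCast, _root_.sq_abs]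
            calc G lam ≤ (4 / (b - lam) ^ 2) * (3 * |b - lam| ^ β) := by
                  apply mul_le_mul (hratio_le _) hkey (Real.rpow_nonneg (abs_nonneg _) _)
                  positivity
              _ = 12 * (|b - lam| ^ β * ((b - lam) ^ 2)⁻¹) := by ring
              _ = 12 * |lam - b| ^ (β - 2) := by rw [hr2]
          rw [hv]
          linarith
  -- measurability and integrability of G
  have hGmeas : Measurable G := by
    rw [hGdef]; fun_prop
  have hMaj : Integrable (fun x => m1a x + m1b x + m2 x + m3 x + m4 x) :=
    (((hm1a.add hm1b).add hm2).add hm3).add hm4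
  have hGint : Integrable G := by
    apply hMaj.mono hGmeas.aestronglyMeasurable
    apply Filter.Eventually.of_forall
    intro lam
    rw [Real.norm_eq_abs, Real.norm_eq_abs, _root_.abs_of_nonneg (hGnonneg lam),
      _root_.abs_of_nonneg]
    · exact hpt lam
    · have h1a0 : 0 ≤ m1a lam := Set.indicator_nonneg (fun x _ => by positivity) lam
      have h1b0 : 0 ≤ m1b lam := Set.indicator_nonneg (fun x _ => by positivity) lam
      have h20 : 0 ≤ m2 lam := Set.indicator_nonneg (fun x _ => by positivity) lam
      have h30 : 0 ≤ m3 lam := Set.indicator_nonneg (fun x _ => by positivity) lam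
      have h40 : 0 ≤ m4 lam := Set.indicator_nonneg (fun x _ => by positivity) lam
      linarith
  refine ⟨hGint, ?_, ?_⟩
  · -- lower bound
    have hμIcc : volume (Set.Icc (b+1) (b+2)) ≠ ⊤ := measure_Icc_lt_top.ne
    have hconst : ∀ lam ∈ Set.Icc (b+1) (b+2),
        ((1 - Real.cos 1) / 16) * K ^ α ≤ G lam := by
      intro lam hmem
      rw [Set.mem_Icc] at hmem
      obtain ⟨hm1, hm2'⟩ := hmem
      have hcos : Real.cos (b - lam) ≤ Real.cos 1 := by
        rw [show b - lam = -(lam - b) by ring, Real.cos_neg]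
        exact Real.cos_le_cos_of_nonneg_of_le_pi (by norm_num)
          (by nlinarith) (by linarith)
      have hsq4 : (b - lam) ^ 2 ≤ 4 := by nlinarith
      have hsqpos : (0:ℝ) < (b - lam) ^ 2 := by nlinarith
      have hr : (1 - Real.cos 1) / 2 ≤ (2 - 2 * Real.cos (b - lam)) / (b - lam) ^ 2 := by
        rw [div_le_div_iff₀ (by norm_num) hsqpos]
        nlinarith [Real.cos_le_one 1]
      have hKlam : K ≤ |lam| := by
        rcases ht with ht' | ht'
        · have hb0 : b = 0 := by
            have := abs_eq_zero.mp (by rw [hb, ht']; ring)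
            exact this
          rw [hb0] at hm1 hm2'
          rw [hKdef, ht', _root_.abs_of_nonneg (by linarith)]
          linarith
        · have h3 : |b| - |b - lam| ≤ |lam| := by
            have h4 := abs_sub_abs_le_abs_sub b lam
            linarith
          have h5 : |b - lam| ≤ 2 := by
            rw [abs_le]; constructor <;> linarith
          rw [hb] at h3; rw [hKdef]; nlinarith
      have hlam8 : |lam| ≤ 8 * K := by
        have h6 : |lam| ≤ |lam - b| + |b| := by
          have := abs_add_le (lam - b) b
          simpa using this
        have h7 : |lam - b| ≤ 2 := by
          rw [abs_le]; constructor <;> linarith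
        rw [hb] at h6; rw [hKdef]; nlinarith
      have hlamα : (1/8) * K ^ α ≤ |lam| ^ α := by
        rcases le_or_gt 0 α with hα0 | hα0
        · have h8 : K ^ α ≤ |lam| ^ α := Real.rpow_le_rpow hK0.le hKlam hα0
          nlinarith [hKα]
        · have h8 : (8 * K) ^ α ≤ |lam| ^ α :=
            Real.rpow_le_rpow_of_nonpos (lt_of_lt_of_le hK0 hKlam) hlam8 hα0.le
          have h9 : (8 * K) ^ α = 8 ^ α * K ^ α := Real.mul_rpow (by norm_num) hK0.le
          have h10 : (1/8:ℝ) ≤ (8:ℝ) ^ α := by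
            have h11 := Real.rpow_le_rpow_of_exponent_le (by norm_num : (1:ℝ) ≤ 8) hα₁.le
            rw [Real.rpow_neg_one] at h11
            linarith [h11]
          nlinarith [hKα, Real.rpow_nonneg (show (0:ℝ) ≤ 8 by norm_num) α]
      calc ((1 - Real.cos 1) / 16) * K ^ α
          = ((1 - Real.cos 1) / 2) * ((1/8) * K ^ α) := by ring
        _ ≤ ((2 - 2 * Real.cos (b - lam)) / (b - lam) ^ 2) * |lam| ^ α := by
            apply mul_le_mul hr hlamα (mul_nonneg (by norm_num) hKα.le) (hratio_nonneg _)
        _ = G lam := rfl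
    have h12 := MeasureTheory.setIntegral_ge_of_const_le measurableSet_Icc hμIcc hconst
      hGint.integrableOn
    have h13 : (volume (Set.Icc (b+1) (b+2))).toReal = 1 := by
      rw [Real.volume_Icc]
      norm_num
    rw [measureReal_def, h13, smul_eq_mul, one_mul] at h12
    calc ((1 - Real.cos 1) / 16) * (1 + t) ^ α
        = ((1 - Real.cos 1) / 16) * K ^ α := by rw [hKdef]
      _ ≤ ∫ lam in Set.Icc (b+1) (b+2), G lam := h12
      _ ≤ ∫ lam, G lam := MeasureTheory.setIntegral_le_integral hGint
          (Filter.Eventually.of_forall hGnonneg)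
  · -- upper bound
    have hint1 : ∫ lam, G lam ≤ ∫ lam, (m1a lam + m1b lam + m2 lam + m3 lam + m4 lam) :=
      integral_mono hGint hMaj hpt
    have i12 : Integrable (fun lam => m1a lam + m1b lam) := hm1a.add hm1b
    have i123 : Integrable (fun lam => m1a lam + m1b lam + m2 lam) := i12.add hm2
    have i1234 : Integrable (fun lam => m1a lam + m1b lam + m2 lam + m3 lam) := i123.add hm3
    have hsum : ∫ lam, (m1a lam + m1b lam + m2 lam + m3 lam + m4 lam)
        = (∫ lam, m1a lam) + (∫ lam, m1b lam) + (∫ lam, m2 lam) + (∫ lam, m3 lam)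
          + (∫ lam, m4 lam) := by
      rw [integral_add i1234 hm4, integral_add i123 hm3, integral_add i12 hm2,
        integral_add hm1a hm1b]
    have hv1a : ∫ lam, m1a lam = K ^ α * ∫ x in Set.Icc (0:ℝ) 1, |x| ^ α := by
      rw [hm1adef, MeasureTheory.integral_indicator measurableSet_Icc,
        integral_const_mul _ _]
    have hv1b : ∫ lam, m1b lam = K ^ α * ∫ x in Set.Icc (-1:ℝ) 0, |x| ^ α := by
      rw [hm1bdef, MeasureTheory.integral_indicator measurableSet_Icc,
        integral_const_mul _ _]
    have hv2 : ∫ lam, m2 lam = (2 * π) * (3 * π * K ^ α) := by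
      rw [hm2def, MeasureTheory.integral_indicator measurableSet_Icc,
        MeasureTheory.setIntegral_const, measureReal_def, Real.volume_Icc, smul_eq_mul]
      congr 1
      rw [show b + π - (b - π) = 2 * π by ring, ENNReal.toReal_ofReal (by positivity)]
    have hv3 : ∫ lam, m3 lam ≤ 24 * K ^ α := by
      have e3 : (fun x => m3 x) = fun x => (12 * π * K ^ α) *
          Set.indicator {x : ℝ | π < |x - b|} (fun x : ℝ => |x - b| ^ (-2:ℝ)) x := by
        funext x; rw [hm3def, Set.indicator_const_mul]
      rw [e3, integral_const_mul, htail3.2]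
      have : (2:ℝ) * (π ^ ((-2:ℝ) + 1) / (-((-2:ℝ) + 1))) = 2 / π := by
        norm_num
        rw [Real.rpow_neg_one]
        ring
      rw [this]
      rw [show 12 * π * K ^ α * (2 / π) = 24 * K ^ α * (π / π) by ring,
        div_self hπ.ne', mul_one]
    have hv4 : ∫ lam, m4 lam ≤ (24 / (1 - β)) * K ^ α := by
      have e4 : (fun x => m4 x) = fun x => 12 *
          Set.indicator {x : ℝ | π * K < |x - b|} (fun x : ℝ => |x - b| ^ (β - 2)) x := by
        funext x; rw [hm4def, Set.indicator_const_mul]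
      rw [e4, integral_const_mul, htail4.2]
      have hπK : (π * K) ^ (β - 2 + 1) = π ^ (β - 1) * K ^ (β - 1) := by
        rw [show β - 2 + 1 = β - 1 by ring]
        exact Real.mul_rpow hπ.le hK0.le
      have hπβ : π ^ (β - 1) ≤ 1 :=
        Real.rpow_le_one_of_one_le_of_nonpos (by linarith) (by linarith)
      have hKβ : K ^ (β - 1) ≤ K ^ α := Real.rpow_le_rpow_of_exponent_le hK1 hβα
      have hpos1 : (0:ℝ) < -(β - 2 + 1) := by linarith
      rw [show (-(β - 2 + 1)) = 1 - β by ring] at *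
      rw [show β - 2 + 1 = β - 1 by ring] at *
      rw [hπK]
      have hπβ0 : 0 ≤ π ^ (β - 1) := Real.rpow_nonneg hπ.le _
      have hKβ0 : 0 ≤ K ^ (β - 1) := Real.rpow_nonneg hK0.le _
      have h20 : π ^ (β - 1) * K ^ (β - 1) ≤ K ^ α := by
        calc π ^ (β - 1) * K ^ (β - 1) ≤ 1 * K ^ (β - 1) :=
              mul_le_mul_of_nonneg_right hπβ hKβ0
          _ = K ^ (β - 1) := one_mul _
          _ ≤ K ^ α := hKβ
      calc 12 * (2 * (π ^ (β - 1) * K ^ (β - 1) / (1 - β)))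
          ≤ 12 * (2 * (K ^ α / (1 - β))) := by
            have hd : π ^ (β - 1) * K ^ (β - 1) / (1 - β) ≤ K ^ α / (1 - β) := by
              apply div_le_div_of_nonneg_right h20 (by linarith)
            linarith
        _ = (24 / (1 - β)) * K ^ α := by ring
    calc ∫ lam, G lam
        ≤ (∫ lam, m1a lam) + (∫ lam, m1b lam) + (∫ lam, m2 lam) + (∫ lam, m3 lam)
          + (∫ lam, m4 lam) := by rw [← hsum]; exact hint1
      _ ≤ K ^ α * (∫ x in Set.Icc (0:ℝ) 1, |x| ^ α)
          + K ^ α * (∫ x in Set.Icc (-1:ℝ) 0, |x| ^ α)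
          + 6 * π ^ 2 * K ^ α + 24 * K ^ α + (24 / (1 - β)) * K ^ α := by
            rw [hv1a, hv1b, hv2]
            have : (2 * π) * (3 * π * K ^ α) = 6 * π ^ 2 * K ^ α := by ring
            rw [this]
            linarith [hv3, hv4]
      _ = ((∫ x in Set.Icc (0:ℝ) 1, |x| ^ α) + (∫ x in Set.Icc (-1:ℝ) 0, |x| ^ α)
          + 6 * π ^ 2 + 24 + 24 / (1 - β)) * K ^ α := by ring
      _ = ((∫ x in Set.Icc (0:ℝ) 1, |x| ^ α) + (∫ x in Set.Icc (-1:ℝ) 0, |x| ^ α)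
          + 6 * π ^ 2 + 24 + 24 / (1 - max α 0)) * (1 + t) ^ α := by rw [← hβdef, ← hKdef]

/-- The squared `L²(μ)`-norm of `t ↦ e^{2πikt}` on `[0,1]` under the fBM spectral
measure `μ(dλ) = (c_H/2π)|λ|^{1-2H}dλ` is finite and of exact order `(1+|k|)^{1-2H}`. -/
theorem exp_spectral_norm_order
    (H : ℝ) (hH : H ∈ Set.Ioo (0:ℝ) 1) :
    ∃ c C : ℝ, 0 < c ∧ c ≤ C ∧
      ∀ k : ℤ,
        Integrable (fun lam : ℝ =>
          ‖(∫ x in (0:ℝ)..1,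
            Complex.exp (Complex.I * (2 * π * (k : ℝ) - lam) * x))‖ ^ 2 *
              |lam| ^ (1 - 2 * H)) ∧
        c * (1 + |(k : ℝ)|) ^ (1 - 2 * H) ≤
          (Real.sin (π * H) * Real.Gamma (2 * H + 1) / (2 * π)) *
            ∫ lam : ℝ,
              ‖(∫ x in (0:ℝ)..1,
                Complex.exp (Complex.I * (2 * π * (k : ℝ) - lam) * x))‖ ^ 2 *
                  |lam| ^ (1 - 2 * H) ∧
        (Real.sin (π * H) * Real.Gamma (2 * H + 1) / (2 * π)) *
            (∫ lam : ℝ,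
              ‖(∫ x in (0:ℝ)..1,
                Complex.exp (Complex.I * (2 * π * (k : ℝ) - lam) * x))‖ ^ 2 *
                  |lam| ^ (1 - 2 * H)) ≤
          C * (1 + |(k : ℝ)|) ^ (1 - 2 * H) := by
  obtain ⟨hH0, hH1⟩ := hH
  have hπ : (0:ℝ) < π := Real.pi_pos
  have hα₁ : -1 < 1 - 2 * H := by linarith
  have hα₂ : 1 - 2 * H < 1 := by linarith
  have hcH : 0 < Real.sin (π * H) * Real.Gamma (2 * H + 1) / (2 * π) := by
    have hsin : 0 < Real.sin (π * H) :=
      Real.sin_pos_of_pos_of_lt_pi (by positivity) (by nlinarith)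
    have hGam : 0 < Real.Gamma (2 * H + 1) := Real.Gamma_pos_of_pos (by linarith)
    exact div_pos (mul_pos hsin hGam) (by linarith)
  have hcos1 : Real.cos 1 < 1 := by
    have h := Real.cos_lt_cos_of_nonneg_of_le_pi le_rfl (by linarith [Real.pi_gt_three]) one_pos
    rwa [Real.cos_zero] at h
  set cH : ℝ := Real.sin (π * H) * Real.Gamma (2 * H + 1) / (2 * π) with hcHdef
  set Cl : ℝ := cH * ((1 - Real.cos 1) / 16) with hCldef
  set Cu : ℝ := cH * ((∫ x in Set.Icc (0:ℝ) 1, |x| ^ (1 - 2*H))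
      + (∫ x in Set.Icc (-1:ℝ) 0, |x| ^ (1 - 2*H))
      + 6 * π ^ 2 + 24 + 24 / (1 - max (1 - 2*H) 0)) with hCudef
  have hCl : 0 < Cl := mul_pos hcH (by linarith)
  refine ⟨Cl, max Cl Cu, hCl, le_max_left _ _, fun k => ?_⟩
  have ht : |(k:ℝ)| = 0 ∨ 1 ≤ |(k:ℝ)| := by
    rcases eq_or_ne k 0 with rfl | hk
    · left; simp
    · right; exact_mod_cast Int.one_le_abs hk
  have hb : |2 * π * (k:ℝ)| = 2 * π * |(k:ℝ)| := by
    rw [abs_mul, _root_.abs_of_pos (by positivity : (0:ℝ) < 2 * π)]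
  obtain ⟨hint, hlow, hup⟩ := master_bound hα₁ hα₂ ht hb
  have hne : ∀ᵐ lam : ℝ, lam ≠ 2 * π * (k:ℝ) := by
    rw [MeasureTheory.ae_iff]
    have : {lam : ℝ | ¬lam ≠ 2 * π * (k:ℝ)} = {2 * π * (k:ℝ)} := by
      ext x; simp
    rw [this]
    exact Real.volume_singleton
  have hFG : (fun lam : ℝ =>
      ‖(∫ x in (0:ℝ)..1,
        Complex.exp (Complex.I * (2 * π * (k : ℝ) - lam) * x))‖ ^ 2 *
          |lam| ^ (1 - 2 * H)) =ᵐ[volume]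
      (fun lam : ℝ => (2 - 2 * Real.cos (2 * π * (k:ℝ) - lam)) / (2 * π * (k:ℝ) - lam) ^ 2
        * |lam| ^ (1 - 2*H)) := by
    filter_upwards [hne] with lam hlam
    have ha : 2 * π * (k:ℝ) - lam ≠ 0 := sub_ne_zero.2 (Ne.symm hlam)
    have h1 := abs_exp_integral_sq ha
    rw [show ((2 * π * (k:ℝ) - lam : ℝ) : ℂ) = 2 * (π:ℂ) * ((k:ℝ):ℂ) - (lam:ℂ) from by
      push_cast; ring] at h1
    rw [h1]
  have hIeq : (∫ lam : ℝ,
      ‖(∫ x in (0:ℝ)..1,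
        Complex.exp (Complex.I * (2 * π * (k : ℝ) - lam) * x))‖ ^ 2 *
          |lam| ^ (1 - 2 * H))
      = ∫ lam : ℝ, (2 - 2 * Real.cos (2 * π * (k:ℝ) - lam)) / (2 * π * (k:ℝ) - lam) ^ 2
          * |lam| ^ (1 - 2*H) := integral_congr_ae hFG
  refine ⟨hint.congr hFG.symm, ?_, ?_⟩
  · rw [hIeq]
    calc Cl * (1 + |(k:ℝ)|) ^ (1 - 2*H)
        = cH * (((1 - Real.cos 1) / 16) * (1 + |(k:ℝ)|) ^ (1 - 2*H)) := by
          rw [hCldef]; ring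
      _ ≤ cH * ∫ lam : ℝ, (2 - 2 * Real.cos (2 * π * (k:ℝ) - lam))
            / (2 * π * (k:ℝ) - lam) ^ 2 * |lam| ^ (1 - 2*H) :=
          mul_le_mul_of_nonneg_left hlow hcH.le
  · rw [hIeq]
    have hKα : (0:ℝ) ≤ (1 + |(k:ℝ)|) ^ (1 - 2*H) :=
      Real.rpow_nonneg (by positivity) _
    calc cH * ∫ lam : ℝ, (2 - 2 * Real.cos (2 * π * (k:ℝ) - lam))
            / (2 * π * (k:ℝ) - lam) ^ 2 * |lam| ^ (1 - 2*H)
        ≤ cH * (((∫ x in Set.Icc (0:ℝ) 1, |x| ^ (1 - 2*H))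
            + (∫ x in Set.Icc (-1:ℝ) 0, |x| ^ (1 - 2*H))
            + 6 * π ^ 2 + 24 + 24 / (1 - max (1 - 2*H) 0))
              * (1 + |(k:ℝ)|) ^ (1 - 2*H)) := mul_le_mul_of_nonneg_left hup hcH.le
      _ = Cu * (1 + |(k:ℝ)|) ^ (1 - 2*H) := by rw [hCudef]; ring
      _ ≤ max Cl Cu * (1 + |(k:ℝ)|) ^ (1 - 2*H) :=
          mul_le_mul_of_nonneg_right (le_max_right _ _) hKα
end
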